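/- Let λ ∈ ℂ. Let α, c : ℂ → ℂ and Π : ℂ → M₂(ℂ) be complex-differentiable at λ, with α(λ) ≠ 0 and Π(λ) invertible. Define χ(z) = Π(z) · diag(α(z)^{−1}, α(z)) · (I₂ + c(z)·σ⁺). Then χ(λ) is invertible and tr( χ′(λ) · (σ₃ + 2c(λ)·σ⁺) · χ(λ)^{−1} ) = tr( Π′(λ) · σ₃ · Π(λ)^{−1} ) − 2·α′(λ)/α(λ). -/

import Mathlib

set_option maxHeartbeats 1000000 in
lemma aux_trace (a a' cl c' p00 p01 p10 p11 q00 q01 q10 q11 : ℂ)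
    (ha : a ≠ 0) (hD : p00 * p11 - p01 * p10 ≠ 0) :
    Matrix.trace
      (!![q00 * a⁻¹ + p00 * (-a' / a ^ 2),
          (q00 * a⁻¹ + p00 * (-a' / a ^ 2)) * cl + p00 * a⁻¹ * c' + (q01 * a + p01 * a');
          q10 * a⁻¹ + p10 * (-a' / a ^ 2),
          (q10 * a⁻¹ + p10 * (-a' / a ^ 2)) * cl + p10 * a⁻¹ * c' + (q11 * a + p11 * a')] *
        ((!![1, 0; 0, -1] : Matrix (Fin 2) (Fin 2) ℂ) + (2 * cl) • !![0, 1; 0, 0]) *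
        ((p00 * p11 - p01 * p10)⁻¹ •
          !![p10 * a⁻¹ * cl + p11 * a, -(p00 * a⁻¹ * cl + p01 * a);
             -(p10 * a⁻¹), p00 * a⁻¹]))
      = Matrix.trace (!![q00, q01; q10, q11] * (!![1, 0; 0, -1] : Matrix (Fin 2) (Fin 2) ℂ) *
          ((p00 * p11 - p01 * p10)⁻¹ • !![p11, -p01; -p10, p00]))
        - 2 * a' / a := by
  have hA : !![q00 * a⁻¹ + p00 * (-a' / a ^ 2),
          (q00 * a⁻¹ + p00 * (-a' / a ^ 2)) * cl + p00 * a⁻¹ * c' + (q01 * a + p01 * a');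
          q10 * a⁻¹ + p10 * (-a' / a ^ 2),
          (q10 * a⁻¹ + p10 * (-a' / a ^ 2)) * cl + p10 * a⁻¹ * c' + (q11 * a + p11 * a')]
      = (a ^ 2)⁻¹ • !![q00 * a - p00 * a',
          (q00 * a - p00 * a') * cl + p00 * a * c' + (q01 * a + p01 * a') * a ^ 2;
          q10 * a - p10 * a',
          (q10 * a - p10 * a') * cl + p10 * a * c' + (q11 * a + p11 * a') * a ^ 2] := by
    ext i j
    fin_cases i <;> fin_cases j <;>
      simp only [Matrix.smul_apply, Matrix.cons_val', Matrix.cons_val_zero, Matrix.cons_val_one,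
        Matrix.head_cons, Matrix.empty_val', Matrix.cons_val_fin_one, smul_eq_mul,
        Matrix.of_apply, Fin.mk_one, Fin.zero_eta] <;>
      field_simp <;> ring
  have hC : !![p10 * a⁻¹ * cl + p11 * a, -(p00 * a⁻¹ * cl + p01 * a);
             -(p10 * a⁻¹), p00 * a⁻¹]
      = a⁻¹ • !![p10 * cl + p11 * a ^ 2, -(p00 * cl + p01 * a ^ 2); -p10, p00] := by
    ext i j
    fin_cases i <;> fin_cases j <;>
      simp only [Matrix.smul_apply, Matrix.cons_val', Matrix.cons_val_zero, Matrix.cons_val_one,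
        Matrix.head_cons, Matrix.empty_val', Matrix.cons_val_fin_one, smul_eq_mul,
        Matrix.of_apply, Fin.mk_one, Fin.zero_eta] <;>
      field_simp <;> ring
  rw [hA, hC]
  simp only [Matrix.smul_mul, Matrix.mul_smul, Matrix.trace_smul, smul_eq_mul, smul_smul]
  field_simp
  simp only [Matrix.trace_fin_two, Matrix.of_apply, Matrix.cons_val', Matrix.cons_val_zero,
    Matrix.cons_val_one, Matrix.head_cons, Matrix.empty_val', Matrix.cons_val_fin_one,
    Matrix.head_fin_const, Matrix.mul_apply, Fin.sum_univ_two, Matrix.add_apply, Matrix.smul_apply,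
    smul_eq_mul]
  ring

set_option maxHeartbeats 1000000 in
/-- The trace identity (6.2): for `χ(z) = Π(z) · α(z)^{-σ₃} · (I₂ + c(z)σ⁺)`,
`tr(χ'(λ)(σ₃ + 2c(λ)σ⁺)χ(λ)⁻¹) = tr(Π'(λ)σ₃Π(λ)⁻¹) - 2α'(λ)/α(λ)`. -/
theorem statement7 (lam : ℂ) (α c : ℂ → ℂ) (Pmat : ℂ → Matrix (Fin 2) (Fin 2) ℂ)
    (hα : DifferentiableAt ℂ α lam) (hc : DifferentiableAt ℂ c lam)
    (hP : ∀ i j, DifferentiableAt ℂ (fun z => Pmat z i j) lam)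
    (hα0 : α lam ≠ 0) (hPinv : IsUnit (Pmat lam))
    (χ : ℂ → Matrix (Fin 2) (Fin 2) ℂ)
    (hχ : ∀ z, χ z = Pmat z * Matrix.diagonal ![(α z)⁻¹, α z] *
      ((1 : Matrix (Fin 2) (Fin 2) ℂ) + c z • !![0, 1; 0, 0])) :
    IsUnit (χ lam) ∧
    Matrix.trace ((Matrix.of fun i j => deriv (fun z => χ z i j) lam) *
        ((!![1, 0; 0, -1] : Matrix (Fin 2) (Fin 2) ℂ) +
          (2 * c lam) • !![0, 1; 0, 0]) * (χ lam)⁻¹)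
      = Matrix.trace ((Matrix.of fun i j => deriv (fun z => Pmat z i j) lam) *
          (!![1, 0; 0, -1] : Matrix (Fin 2) (Fin 2) ℂ) * (Pmat lam)⁻¹)
        - 2 * deriv α lam / α lam := by
  have he00 : ∀ z, χ z 0 0 = Pmat z 0 0 * (α z)⁻¹ := by
    intro z; rw [hχ z]
    simp [Matrix.mul_apply, Fin.sum_univ_two, Matrix.diagonal, Matrix.one_apply]
  have he10 : ∀ z, χ z 1 0 = Pmat z 1 0 * (α z)⁻¹ := by
    intro z; rw [hχ z]
    simp [Matrix.mul_apply, Fin.sum_univ_two, Matrix.diagonal, Matrix.one_apply]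
  have he01 : ∀ z, χ z 0 1 = Pmat z 0 0 * (α z)⁻¹ * c z + Pmat z 0 1 * α z := by
    intro z; rw [hχ z]
    simp [Matrix.mul_apply, Fin.sum_univ_two, Matrix.diagonal, Matrix.one_apply]
  have he11 : ∀ z, χ z 1 1 = Pmat z 1 0 * (α z)⁻¹ * c z + Pmat z 1 1 * α z := by
    intro z; rw [hχ z]
    simp [Matrix.mul_apply, Fin.sum_univ_two, Matrix.diagonal, Matrix.one_apply]
  have hinv : DifferentiableAt ℂ (fun z => (α z)⁻¹) lam := hα.inv hα0
  have hdi : deriv (fun z => (α z)⁻¹) lam = -deriv α lam / α lam ^ 2 := deriv_inv'' hα hα0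
  have hd00 : deriv (fun z => χ z 0 0) lam =
      deriv (fun z => Pmat z 0 0) lam * (α lam)⁻¹ +
        Pmat lam 0 0 * (-deriv α lam / α lam ^ 2) := by
    rw [funext he00, deriv_fun_mul (hP 0 0) hinv, hdi]
  have hd10 : deriv (fun z => χ z 1 0) lam =
      deriv (fun z => Pmat z 1 0) lam * (α lam)⁻¹ +
        Pmat lam 1 0 * (-deriv α lam / α lam ^ 2) := by
    rw [funext he10, deriv_fun_mul (hP 1 0) hinv, hdi]
  have hd01 : deriv (fun z => χ z 0 1) lam =
      (deriv (fun z => Pmat z 0 0) lam * (α lam)⁻¹ +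
        Pmat lam 0 0 * (-deriv α lam / α lam ^ 2)) * c lam +
        Pmat lam 0 0 * (α lam)⁻¹ * deriv c lam +
        (deriv (fun z => Pmat z 0 1) lam * α lam + Pmat lam 0 1 * deriv α lam) := by
    rw [funext he01, deriv_fun_add (((hP 0 0).fun_mul hinv).fun_mul hc) ((hP 0 1).fun_mul hα),
      deriv_fun_mul ((hP 0 0).fun_mul hinv) hc, deriv_fun_mul (hP 0 0) hinv,
      deriv_fun_mul (hP 0 1) hα, hdi]
  have hd11 : deriv (fun z => χ z 1 1) lam =
      (deriv (fun z => Pmat z 1 0) lam * (α lam)⁻¹ +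
        Pmat lam 1 0 * (-deriv α lam / α lam ^ 2)) * c lam +
        Pmat lam 1 0 * (α lam)⁻¹ * deriv c lam +
        (deriv (fun z => Pmat z 1 1) lam * α lam + Pmat lam 1 1 * deriv α lam) := by
    rw [funext he11, deriv_fun_add (((hP 1 0).fun_mul hinv).fun_mul hc) ((hP 1 1).fun_mul hα),
      deriv_fun_mul ((hP 1 0).fun_mul hinv) hc, deriv_fun_mul (hP 1 0) hinv,
      deriv_fun_mul (hP 1 1) hα, hdi]
  have hdP : (Pmat lam).det ≠ 0 := by
    simpa [isUnit_iff_ne_zero] using (Matrix.isUnit_iff_isUnit_det _).1 hPinv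
  have hdetP : (Pmat lam).det = Pmat lam 0 0 * Pmat lam 1 1 - Pmat lam 0 1 * Pmat lam 1 0 :=
    Matrix.det_fin_two _
  have hdne : Pmat lam 0 0 * Pmat lam 1 1 - Pmat lam 0 1 * Pmat lam 1 0 ≠ 0 := hdetP ▸ hdP
  have hdetχ : (χ lam).det = Pmat lam 0 0 * Pmat lam 1 1 - Pmat lam 0 1 * Pmat lam 1 0 := by
    rw [Matrix.det_fin_two, he00 lam, he01 lam, he10 lam, he11 lam]
    field_simp
    ring
  have hUnit : IsUnit (χ lam) := by
    rw [Matrix.isUnit_iff_isUnit_det, hdetχ]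
    exact isUnit_iff_ne_zero.2 hdne
  refine ⟨hUnit, ?_⟩
  have hχinv : (χ lam)⁻¹ = ((Pmat lam 0 0 * Pmat lam 1 1 - Pmat lam 0 1 * Pmat lam 1 0)⁻¹) •
      !![Pmat lam 1 0 * (α lam)⁻¹ * c lam + Pmat lam 1 1 * α lam,
         -(Pmat lam 0 0 * (α lam)⁻¹ * c lam + Pmat lam 0 1 * α lam);
         -(Pmat lam 1 0 * (α lam)⁻¹), Pmat lam 0 0 * (α lam)⁻¹] := by
    rw [Matrix.inv_def, Matrix.adjugate_fin_two, hdetχ, Ring.inverse_eq_inv',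
      he00 lam, he01 lam, he10 lam, he11 lam]
  have hPinv' : (Pmat lam)⁻¹ = ((Pmat lam 0 0 * Pmat lam 1 1 - Pmat lam 0 1 * Pmat lam 1 0)⁻¹) •
      !![Pmat lam 1 1, -Pmat lam 0 1; -Pmat lam 1 0, Pmat lam 0 0] := by
    rw [Matrix.inv_def, Matrix.adjugate_fin_two, hdetP, Ring.inverse_eq_inv']
  have hof : (Matrix.of fun i j => deriv (fun z => χ z i j) lam) =
      !![deriv (fun z => χ z 0 0) lam, deriv (fun z => χ z 0 1) lam;
         deriv (fun z => χ z 1 0) lam, deriv (fun z => χ z 1 1) lam] := by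
    ext i j; fin_cases i <;> fin_cases j <;> rfl
  have hofP : (Matrix.of fun i j => deriv (fun z => Pmat z i j) lam) =
      !![deriv (fun z => Pmat z 0 0) lam, deriv (fun z => Pmat z 0 1) lam;
         deriv (fun z => Pmat z 1 0) lam, deriv (fun z => Pmat z 1 1) lam] := by
    ext i j; fin_cases i <;> fin_cases j <;> rfl
  rw [hχinv, hPinv', hof, hofP, hd00, hd01, hd10, hd11]
  exact aux_trace (α lam) (deriv α lam) (c lam) (deriv c lam)
    (Pmat lam 0 0) (Pmat lam 0 1) (Pmat lam 1 0) (Pmat lam 1 1)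
    (deriv (fun z => Pmat z 0 0) lam) (deriv (fun z => Pmat z 0 1) lam)
    (deriv (fun z => Pmat z 1 0) lam) (deriv (fun z => Pmat z 1 1) lam) hα0 hdne
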